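/- Let A(x) = A₀ + x₁A₁ + ⋯ + xₙAₙ with Aᵢ real symmetric m × m matrices, S = {x : A(x) ⪰ 0}, and suppose x* ∈ S has rank A(x*) = p ≥ 1. If every Euclidean open neighborhood U of x* contains a point x with rank A(x) ≤ p and A(x) not positive semidefinite, then rank A(x*) ≤ p − 1, a contradiction; hence no such x* exists. Equivalently: if x* ∈ S with rank A(x*) = p, then there exists an open neighborhood U of x* such that every x ∈ U with rank A(x) ≤ p satisfies A(x) ⪰ 0. -/

import Mathlib

open Matrix Set Module

theorem psd_rank_locally_stable (m n p : ℕ)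
    (A0 : Matrix (Fin m) (Fin m) ℝ) (A : Fin n → Matrix (Fin m) (Fin m) ℝ)
    (hsym0 : A0.IsSymm) (hsym : ∀ i, (A i).IsSymm)
    (xs : Fin n → ℝ) (hxs : (A0 + ∑ i, xs i • A i).PosSemidef)
    (hrk : (A0 + ∑ i, xs i • A i).rank = p) :
    ∃ U : Set (Fin n → ℝ), IsOpen U ∧ xs ∈ U ∧
      ∀ x ∈ U, (A0 + ∑ i, x i • A i).rank ≤ p → (A0 + ∑ i, x i • A i).PosSemidef := by
  classical
  set M : (Fin n → ℝ) → Matrix (Fin m) (Fin m) ℝ := fun x => A0 + ∑ i, x i • A i with hM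
  -- symmetry of all M x
  have hMsym : ∀ x, (M x).IsSymm := by
    intro x
    have : (M x)ᵀ = M x := by
      simp only [hM, transpose_add, transpose_sum, transpose_smul]
      rw [hsym0]
      congr 1
      exact Finset.sum_congr rfl fun i _ => by rw [hsym i]
    exact this
  -- the subspace W = range of M xs
  set W : Submodule ℝ (Fin m → ℝ) := LinearMap.range (M xs).mulVecLin with hW
  have hWrank : finrank ℝ W = p := hrk
  -- strict positivity of the quadratic form of M xs on W \ {0}
  have hpos : ∀ v ∈ W, v ≠ 0 → 0 < v ⬝ᵥ (M xs).mulVec v := by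
    intro v hv hv0
    rcases lt_or_eq_of_le (by simpa using hxs.dotProduct_mulVec_nonneg v) with h | h
    · exact h
    · exfalso
      have hker : (M xs).mulVec v = 0 :=
        (hxs.dotProduct_mulVec_zero_iff v).mp (by simpa using h.symm)
      obtain ⟨u, hu⟩ := hv
      have hvv : v ⬝ᵥ v = 0 := by
        have : v ⬝ᵥ v = v ⬝ᵥ (M xs).mulVec u := by rw [← hu]; rfl
        rw [this, dotProduct_mulVec, ← (hMsym xs), vecMul_transpose, hker, zero_dotProduct]
      exact hv0 (dotProduct_self_eq_zero.mp hvv)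
  -- the compact set of unit vectors in W
  set S : Set (Fin m → ℝ) := Metric.sphere 0 1 ∩ (W : Set (Fin m → ℝ)) with hS
  have hScomp : IsCompact S :=
    (isCompact_sphere 0 1).inter_right W.closed_of_finiteDimensional
  -- the quadratic form as a jointly continuous function
  set f : (Fin n → ℝ) × (Fin m → ℝ) → ℝ := fun q => q.2 ⬝ᵥ (M q.1).mulVec q.2 with hf
  have hfc : Continuous f := by
    have hfe : f = fun q : (Fin n → ℝ) × (Fin m → ℝ) =>
        ∑ i, q.2 i * ∑ j, (A0 i j + ∑ k, q.1 k * A k i j) * q.2 j := by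
      funext q
      simp [hf, hM, dotProduct, mulVec, Matrix.add_apply, Matrix.sum_apply,
        Matrix.smul_apply, smul_eq_mul]
    rw [hfe]
    refine continuous_finset_sum _ fun i _ => Continuous.mul ?_ ?_
    · exact (continuous_apply i).comp continuous_snd
    · refine continuous_finset_sum _ fun j _ => Continuous.mul ?_ ?_
      · refine Continuous.add continuous_const ?_
        exact continuous_finset_sum _ fun k _ =>
          Continuous.mul ((continuous_apply k).comp continuous_fst) continuous_const
      · exact (continuous_apply j).comp continuous_snd
  -- tube lemma
  have hsub : ({xs} : Set (Fin n → ℝ)) ×ˢ S ⊆ f ⁻¹' Set.Ioi 0 := by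
    rintro ⟨x, v⟩ ⟨hx, hvS, hvW⟩
    rcases hx with rfl
    have hv0 : v ≠ 0 := by
      intro h
      rw [h] at hvS
      simp at hvS
    exact hpos v hvW hv0
  obtain ⟨U, V, hUo, hVo, hxU, hSV, hUV⟩ :=
    generalized_tube_lemma isCompact_singleton hScomp (isOpen_Ioi.preimage hfc) hsub
  refine ⟨U, hUo, hxU rfl, ?_⟩
  intro x hxmem hrank
  set B : Matrix (Fin m) (Fin m) ℝ := M x with hB
  -- positivity of the quadratic form of B on W \ {0}
  have hposW : ∀ v ∈ W, v ≠ 0 → 0 < v ⬝ᵥ B.mulVec v := by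
    intro v hv hv0
    have hn : ‖v‖ ≠ 0 := norm_ne_zero_iff.mpr hv0
    have hmem : (‖v‖⁻¹ • v) ∈ S :=
      ⟨by simp [norm_smul, hn, abs_of_nonneg (inv_nonneg.mpr (norm_nonneg v))], W.smul_mem _ hv⟩
    have hfpos : 0 < f (x, ‖v‖⁻¹ • v) := hUV (Set.mk_mem_prod hxmem (hSV hmem))
    have hscale : f (x, ‖v‖⁻¹ • v) = ‖v‖⁻¹ * (‖v‖⁻¹ * (v ⬝ᵥ B.mulVec v)) := by
      simp [hf, hB, mulVec_smul, dotProduct_smul, smul_dotProduct, smul_eq_mul, mul_assoc]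
    rw [hscale] at hfpos
    have h1 : 0 < ‖v‖⁻¹ := inv_pos.mpr (lt_of_le_of_ne (norm_nonneg v) (Ne.symm hn))
    nlinarith [hfpos, mul_pos h1 h1]
  -- kernel of B is disjoint from W
  set K : Submodule ℝ (Fin m → ℝ) := LinearMap.ker B.mulVecLin with hK
  have hdisj : W ⊓ K = ⊥ := by
    rw [Submodule.eq_bot_iff]
    rintro v ⟨hvW, hvK⟩
    by_contra hv0
    have h1 := hposW v hvW hv0
    have h2 : B.mulVec v = 0 := hvK
    rw [h2, dotProduct_zero] at h1
    exact lt_irrefl 0 h1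
  -- dimension count : W ⊔ K = ⊤
  have hrankB : B.rank + finrank ℝ K = m := by
    have := LinearMap.finrank_range_add_finrank_ker B.mulVecLin
    rw [Module.finrank_fin_fun] at this
    exact this
  have hsupfin : finrank ℝ ↥(W ⊔ K) + finrank ℝ ↥(W ⊓ K) = finrank ℝ W + finrank ℝ K :=
    Submodule.finrank_sup_add_finrank_inf_eq W K
  rw [hdisj, finrank_bot, add_zero, hWrank] at hsupfin
  have hsuple : finrank ℝ ↥(W ⊔ K) ≤ m := by
    have := Submodule.finrank_le (W ⊔ K)
    rwa [Module.finrank_fin_fun] at this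
  have hrank' : B.rank ≤ p := hrank
  have hsupeq : W ⊔ K = ⊤ := by
    apply Submodule.eq_top_of_finrank_eq
    rw [Module.finrank_fin_fun]
    omega
  -- conclude positive semidefiniteness
  refine Matrix.posSemidef_iff_dotProduct_mulVec.mpr ⟨?_, ?_⟩
  · rw [Matrix.IsHermitian, conjTranspose_eq_transpose_of_trivial]
    exact hMsym x
  · intro v
    have hv : v ∈ W ⊔ K := hsupeq ▸ Submodule.mem_top
    obtain ⟨w, hw, k, hk, rfl⟩ := Submodule.mem_sup.mp hv
    have hBk : B.mulVec k = 0 := hk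
    have hkBw : k ⬝ᵥ B.mulVec w = 0 := by
      rw [dotProduct_mulVec, hB, ← (hMsym x), vecMul_transpose, ← hB, hBk, zero_dotProduct]
    have hexp : star (w + k) ⬝ᵥ B.mulVec (w + k) = w ⬝ᵥ B.mulVec w := by
      have hstar : star (w + k) = w + k := by simp
      rw [hstar, mulVec_add, hBk, add_zero, add_dotProduct, hkBw, add_zero]
    rw [hexp]
    rcases eq_or_ne w 0 with rfl | hw0
    · simp
    · exact le_of_lt (hposW w hw hw0)
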